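/- arXiv:2206.00351 — 2 statements merged into one kernel-verified Lean document; each statement's English description precedes it below -/
import Mathlib

section
/- There exists a countable universal graph; that is, there exists a simple graph R on a countably infinite vertex set such that for every simple graph G on an at most countable vertex set there is a graph embedding of G into R. -/
open Finset
open scoped Classical

/-- The Rado graph on `ℕ`: `m` and `n` are adjacent if the bit of one
indexed by the other is set. -/
def radoGraph : SimpleGraph ℕ where
  Adj m n := m ∈ n.bitIndices ∨ n ∈ m.bitIndices
  symm := ⟨fun _ _ h => h.symm⟩
  loopless := ⟨fun n h => by
    rcases h with h | h <;> exact Nat.notMem_bitIndices_self n h⟩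

/-- Extension property (one-sided): given finite sets `A`, `B`, there is a
vertex above all of them adjacent to everything in `A` and (if disjoint)
nothing in `B`. -/
lemma rado_ext (A B : Finset ℕ) :
    ∃ v : ℕ, (∀ x ∈ A ∪ B, x < v) ∧ (∀ a ∈ A, radoGraph.Adj v a) ∧
      (∀ b ∈ B, b ∉ A → ¬ radoGraph.Adj v b) := by
  set N := (A ∪ B).sup id + 1 with hN
  set S : Finset ℕ := insert N A with hS
  set v := ((S.sort (· ≤ ·)).map (fun i => 2 ^ i)).sum with hv
  have hbits : v.bitIndices = S.sort (· ≤ ·) :=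
    Nat.bitIndices_twoPowsum (S.sortedLT_sort)
  have hmem : ∀ i, i ∈ v.bitIndices ↔ i ∈ S := by
    intro i; rw [hbits, Finset.mem_sort]
  have hNv : 2 ^ N ≤ v :=
    Nat.two_pow_le_of_mem_bitIndices ((hmem N).2 (mem_insert_self _ _))
  have hlt : ∀ x ∈ A ∪ B, x < v := by
    intro x hx
    have h1 : x ≤ (A ∪ B).sup id := Finset.le_sup (f := id) hx
    have h2 : N < 2 ^ N := Nat.lt_two_pow_self
    omega
  refine ⟨v, hlt, ?_, ?_⟩
  · intro a ha
    exact Or.inr ((hmem a).2 (mem_insert_of_mem ha))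
  · intro b hb hbA hadj
    have hbv : b < v := hlt b (mem_union_right _ hb)
    rcases hadj with h | h
    · exact absurd (Nat.two_pow_le_of_mem_bitIndices h)
        (by have := Nat.lt_two_pow_self (n := v); omega)
    · have hbS : b ∈ S := (hmem b).1 h
      rcases mem_insert.1 hbS with hb' | hA
      · have : b ≤ (A ∪ B).sup id := Finset.le_sup (f := id) (mem_union_right _ hb)
        omega
      · exact hbA hA

/-- The set of images of earlier neighbours of `n`. -/
noncomputable def radoA (H : SimpleGraph ℕ) (n : ℕ) (prev : ℕ → ℕ) : Finset ℕ :=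
  ((Finset.range n).filter (fun m => H.Adj m n)).image prev

/-- The set of images of earlier non-neighbours of `n`. -/
noncomputable def radoB (H : SimpleGraph ℕ) (n : ℕ) (prev : ℕ → ℕ) : Finset ℕ :=
  ((Finset.range n).filter (fun m => ¬ H.Adj m n)).image prev

lemma mem_radoA {H : SimpleGraph ℕ} {n : ℕ} {prev : ℕ → ℕ} {x : ℕ} :
    x ∈ radoA H n prev ↔ ∃ m, m < n ∧ H.Adj m n ∧ prev m = x := by
  simp only [radoA, mem_image, mem_filter, mem_range]
  tauto

lemma mem_radoB {H : SimpleGraph ℕ} {n : ℕ} {prev : ℕ → ℕ} {x : ℕ} :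
    x ∈ radoB H n prev ↔ ∃ m, m < n ∧ ¬ H.Adj m n ∧ prev m = x := by
  simp only [radoB, mem_image, mem_filter, mem_range]
  tauto

noncomputable def radoPick (H : SimpleGraph ℕ) (n : ℕ) (prev : ℕ → ℕ) : ℕ :=
  Classical.choose (rado_ext (radoA H n prev) (radoB H n prev))

/-- The recursively constructed embedding of `H` into the Rado graph. -/
noncomputable def radoEmbFun (H : SimpleGraph ℕ) : ℕ → ℕ
  | n => radoPick H n (fun m => if h : m < n then radoEmbFun H m else 0)
termination_by n => n
decreasing_by exact h

lemma radoEmbFun_def (H : SimpleGraph ℕ) (n : ℕ) :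
    radoEmbFun H n = radoPick H n (fun m => if _ : m < n then radoEmbFun H m else 0) := by
  rw [radoEmbFun]

section

variable (H : SimpleGraph ℕ)

noncomputable def radoPrev (n : ℕ) : ℕ → ℕ :=
  fun m => if _ : m < n then radoEmbFun H m else 0

lemma radoPrev_eq {m n : ℕ} (h : m < n) : radoPrev H n m = radoEmbFun H m := by
  simp [radoPrev, h]

lemma radoEmbFun_spec (n : ℕ) :
    (∀ x ∈ radoA H n (radoPrev H n) ∪ radoB H n (radoPrev H n), x < radoEmbFun H n) ∧
    (∀ a ∈ radoA H n (radoPrev H n), radoGraph.Adj (radoEmbFun H n) a) ∧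
    (∀ b ∈ radoB H n (radoPrev H n), b ∉ radoA H n (radoPrev H n) →
      ¬ radoGraph.Adj (radoEmbFun H n) b) := by
  rw [radoEmbFun_def]
  exact Classical.choose_spec (rado_ext _ _)

lemma radoEmbFun_mono {m n : ℕ} (h : m < n) : radoEmbFun H m < radoEmbFun H n := by
  have hmem : radoEmbFun H m ∈ radoA H n (radoPrev H n) ∪ radoB H n (radoPrev H n) := by
    by_cases hA : H.Adj m n
    · exact mem_union_left _ (mem_radoA.2 ⟨m, h, hA, radoPrev_eq H h⟩)
    · exact mem_union_right _ (mem_radoB.2 ⟨m, h, hA, radoPrev_eq H h⟩)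
  exact (radoEmbFun_spec H n).1 _ hmem

lemma radoEmbFun_injective : Function.Injective (radoEmbFun H) := by
  intro a b hab
  rcases lt_trichotomy a b with h | h | h
  · exact absurd hab (radoEmbFun_mono H h).ne
  · exact h
  · exact absurd hab.symm (radoEmbFun_mono H h).ne

lemma radoEmbFun_adj {m n : ℕ} (h : m < n) :
    radoGraph.Adj (radoEmbFun H n) (radoEmbFun H m) ↔ H.Adj m n := by
  constructor
  · intro hadj
    by_contra hA
    have hB : radoEmbFun H m ∈ radoB H n (radoPrev H n) :=
      mem_radoB.2 ⟨m, h, hA, radoPrev_eq H h⟩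
    have hnA : radoEmbFun H m ∉ radoA H n (radoPrev H n) := by
      intro hmemA
      obtain ⟨m', hm'', hm'A, heq⟩ := mem_radoA.1 hmemA
      rw [radoPrev_eq H hm''] at heq
      have := radoEmbFun_injective H heq
      exact hA (this ▸ hm'A)
    exact (radoEmbFun_spec H n).2.2 _ hB hnA hadj
  · intro hA
    exact (radoEmbFun_spec H n).2.1 _ (mem_radoA.2 ⟨m, h, hA, radoPrev_eq H h⟩)

/-- Every simple graph on `ℕ` embeds into the Rado graph. -/
noncomputable def radoEmbedding : H ↪g radoGraph where
  toFun := radoEmbFun H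
  inj' := radoEmbFun_injective H
  map_rel_iff' := by
    intro a b
    simp only [Function.Embedding.coeFn_mk]
    rcases lt_trichotomy a b with h | h | h
    · rw [SimpleGraph.adj_comm, radoEmbFun_adj H h, SimpleGraph.adj_comm]
    · subst h
      simp [radoGraph.irrefl, H.irrefl]
    · rw [radoEmbFun_adj H h, SimpleGraph.adj_comm]

end

/-- There exists a countable universal graph: a simple graph `R` on a countably
infinite vertex set such that every simple graph on an at most countable
vertex set embeds into `R`. -/
theorem exists_countable_universal_graph :
    ∃ (V : Type) (R : SimpleGraph V), Cardinal.mk V = Cardinal.aleph0 ∧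
      ∀ (W : Type) (G : SimpleGraph W),
        Cardinal.mk W ≤ Cardinal.aleph0 → Nonempty (G ↪g R) := by
  refine ⟨ℕ, radoGraph, Cardinal.mk_nat, fun W G hW => ?_⟩
  rw [← Cardinal.mk_nat, Cardinal.le_def] at hW
  obtain ⟨e⟩ := hW
  exact ⟨(radoEmbedding (G.map e)).comp (SimpleGraph.Embedding.map e G)⟩
end

section
/- If λ is an uncountable cardinal satisfying 2^{<λ} = λ (that is, 2^μ ≤ λ for every cardinal μ < λ), then there exists a universal graph of size λ: a simple graph on a vertex set of cardinality λ such that every simple graph on a vertex set of cardinality at most λ admits a graph embedding into it. -/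
set_option linter.unusedSectionVars false
open Cardinal Ordinal

namespace UG

inductive Vtx (W0 : Type) [LT W0] : Type
  | wit (i : W0) (x : W0) (f : ∀ y : W0, y < x → Vtx W0) : Vtx W0

variable {W0 : Type} [LinearOrder W0]

def Vtx.stage : Vtx W0 → W0
  | .wit i _ _ => i

def Vtx.xOf : Vtx W0 → W0
  | .wit _ x _ => x

def Vtx.fOf : (v : Vtx W0) → {y : W0 // y < v.xOf} → Vtx W0
  | .wit _ _ f, y => f y.1 y.2

def Vtx.Adm : Vtx W0 → Prop
  | .wit i x f => (∀ y (h : y < x), (f y h).Adm) ∧ (∀ y (h : y < x), (f y h).stage < i) ∧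
      #{y : W0 // y < x} ≤ #{y : W0 // y < i} ⊔ ℵ₀

lemma Vtx.adm_iff (v : Vtx W0) : v.Adm ↔ (∀ y, (v.fOf y).Adm) ∧ (∀ y, (v.fOf y).stage < v.stage) ∧
    #{y : W0 // y < v.xOf} ≤ #{y : W0 // y < v.stage} ⊔ ℵ₀ := by
  cases v with
  | wit i x f =>
    simp only [Adm, stage, xOf, fOf, Subtype.forall]

lemma Vtx.ext' {v w : Vtx W0} (hs : v.stage = w.stage) (hx : v.xOf = w.xOf)
    (hf : ∀ (y : W0) (hv : y < v.xOf) (hw : y < w.xOf), v.fOf ⟨y, hv⟩ = w.fOf ⟨y, hw⟩) :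
    v = w := by
  cases v with
  | wit i x f =>
    cases w with
    | wit i' x' f' =>
      obtain rfl : i = i' := hs
      obtain rfl : x = x' := hx
      have : f = f' := by
        funext y h
        exact hf y h h
      rw [this]

def Vtx.mem (u v : Vtx W0) : Prop := ∃ y, v.fOf y = u

lemma Vtx.stage_lt_of_mem {u v : Vtx W0} (hv : v.Adm) (h : u.mem v) : u.stage < v.stage := by
  obtain ⟨y, rfl⟩ := h
  exact ((Vtx.adm_iff v).1 hv).2.1 y

lemma Vtx.adm_of_mem {u v : Vtx W0} (hv : v.Adm) (h : u.mem v) : u.Adm := by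
  obtain ⟨y, rfl⟩ := h
  exact ((Vtx.adm_iff v).1 hv).1 y

def HG (W0 : Type) [LinearOrder W0] : SimpleGraph {v : Vtx W0 // v.Adm} where
  Adj u v := u ≠ v ∧ (u.1.mem v.1 ∨ v.1.mem u.1)
  symm := ⟨fun _ _ ⟨hne, h⟩ => ⟨hne.symm, h.symm⟩⟩
  loopless := ⟨fun _ h => h.1 rfl⟩

/-! ### Counting -/

lemma small_initial {α : Type} [LinearOrder α] [WellFoundedLT α] {μ : Cardinal}
    (h : ∀ a : α, #{b : α // b < a} ≤ μ) : #α ≤ Order.succ μ := by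
  by_contra hc
  push_neg at hc
  have h1 : (Order.succ μ).ord < type ((· < ·) : α → α → Prop) := by
    by_contra h2
    push_neg at h2
    have := Ordinal.card_le_card h2
    rw [Cardinal.card_ord, Ordinal.card_type] at this
    exact absurd this (not_le.2 hc)
  set x : α := (enum ((· < ·) : α → α → Prop)) ⟨(Order.succ μ).ord, h1⟩ with hx
  have h3 : #{b : α // b < x} = Order.succ μ := by
    rw [← Ordinal.card_typein (r := ((· < ·) : α → α → Prop)) x, hx, Ordinal.typein_enum, Cardinal.card_ord]
  have := h x
  rw [h3] at this
  exact absurd this (not_le.2 (Order.lt_succ μ))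

noncomputable def bud (i : W0) : Cardinal := #{y : W0 // y < i} ⊔ ℵ₀

lemma aleph0_le_bud (i : W0) : ℵ₀ ≤ bud i := le_sup_right

lemma bud_mono {i' i : W0} (h : i' < i) : bud i' ≤ bud i := by
  refine sup_le_sup_right ?_ _
  refine Cardinal.mk_le_of_injective (f := fun y : {y : W0 // y < i'} =>
    (⟨y.1, y.2.trans h⟩ : {y : W0 // y < i})) ?_
  intro a b hab
  simp only [Subtype.mk.injEq] at hab
  exact Subtype.ext hab

def lev (i : W0) : Set (Vtx W0) := {v | v.Adm ∧ v.stage = i}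
def levLT (i : W0) : Set (Vtx W0) := {v | v.Adm ∧ v.stage < i}

abbrev Sx (i : W0) : Type := {x : W0 // #{y : W0 // y < x} ≤ bud i}

lemma xOf_small {i : W0} (v : ↥(lev i)) : #{y : W0 // y < v.1.xOf} ≤ bud i := by
  have h := ((Vtx.adm_iff v.1).1 v.2.1).2.2
  rw [v.2.2] at h
  exact h

lemma fOf_mem_levLT {i : W0} (v : ↥(lev i)) (y : {y : W0 // y < v.1.xOf}) :
    v.1.fOf y ∈ levLT i :=
  ⟨((Vtx.adm_iff v.1).1 v.2.1).1 y,
    (((Vtx.adm_iff v.1).1 v.2.1).2.1 y).trans_eq v.2.2⟩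

noncomputable def enc (i : W0)
    (E : ∀ s : Sx i, {y : W0 // y < s.1} ↪ (bud i).out) (v : ↥(lev i)) :
    Sx i × ((bud i).out → Option ↥(levLT i)) :=
  ⟨⟨v.1.xOf, xOf_small v⟩,
   Function.extend (fun y => E ⟨v.1.xOf, xOf_small v⟩ y)
     (fun y => some ⟨v.1.fOf y, fOf_mem_levLT v y⟩) (fun _ => none)⟩

lemma enc_snd (i : W0) (E : ∀ s : Sx i, {y : W0 // y < s.1} ↪ (bud i).out)
    (v : ↥(lev i)) (y : {y : W0 // y < v.1.xOf}) :
    (enc i E v).2 (E ⟨v.1.xOf, xOf_small v⟩ y) = some ⟨v.1.fOf y, fOf_mem_levLT v y⟩ := by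
  exact (E ⟨v.1.xOf, xOf_small v⟩).injective.extend_apply
    (fun y => (some ⟨v.1.fOf y, fOf_mem_levLT v y⟩ : Option ↥(levLT i))) (fun _ => none) y

lemma enc_inj (i : W0) (E : ∀ s : Sx i, {y : W0 // y < s.1} ↪ (bud i).out) :
    Function.Injective (enc i E) := by
  rintro ⟨⟨a1, x1, f1⟩, hv1⟩ ⟨⟨a2, x2, f2⟩, hv2⟩ h
  obtain rfl : x1 = x2 := congrArg (fun p => p.1.1) h
  obtain rfl : a1 = a2 := by
    have e1 : a1 = i := hv1.2
    have e2 : a2 = i := hv2.2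
    rw [e1, e2]
  have hf : f1 = f2 := by
    funext y hy
    have e1 := enc_snd i E ⟨Vtx.wit a1 x1 f1, hv1⟩ ⟨y, hy⟩
    have e2 := enc_snd i E ⟨Vtx.wit a1 x1 f2, hv2⟩ ⟨y, hy⟩
    rw [h] at e1
    have e3 : (some ⟨(Vtx.wit a1 x1 f1).fOf ⟨y, hy⟩, fOf_mem_levLT ⟨Vtx.wit a1 x1 f1, hv1⟩ ⟨y, hy⟩⟩ :
        Option ↥(levLT i)) = some ⟨(Vtx.wit a1 x1 f2).fOf ⟨y, hy⟩,
          fOf_mem_levLT ⟨Vtx.wit a1 x1 f2, hv2⟩ ⟨y, hy⟩⟩ := e1.symm.trans e2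
    exact congrArg Subtype.val (Option.some.inj e3)
  subst hf
  rfl

variable [WellFoundedLT W0]

lemma mk_lev_le (i : W0) : #(lev i : Set (Vtx W0)) ≤ 2 ^ bud i := by
  induction i using WellFoundedLT.induction with
  | _ i IH =>
    have hb0 : ℵ₀ ≤ bud i := aleph0_le_bud i
    have hb2 : ℵ₀ ≤ 2 ^ bud i := hb0.trans (cantor _).le
    -- bound the union of lower levels
    have hLT : #(levLT i : Set (Vtx W0)) ≤ 2 ^ bud i := by
      have hcup : (levLT i : Set (Vtx W0)) = ⋃ i' : {y : W0 // y < i}, lev i'.1 := by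
        ext v
        simp only [levLT, lev, Set.mem_iUnion, Set.mem_setOf_eq]
        constructor
        · rintro ⟨ha, hl⟩
          exact ⟨⟨v.stage, hl⟩, ha, rfl⟩
        · rintro ⟨i', ha, hs⟩
          exact ⟨ha, hs ▸ i'.2⟩
      rw [hcup]
      calc #(⋃ i' : {y : W0 // y < i}, lev i'.1 : Set (Vtx W0))
          ≤ #{y : W0 // y < i} * ⨆ i' : {y : W0 // y < i}, #(lev i'.1 : Set (Vtx W0)) :=
            Cardinal.mk_iUnion_le _
        _ ≤ (2 ^ bud i) * (2 ^ bud i) := by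
            refine mul_le_mul' ((le_sup_left.trans (le_refl (bud i))).trans (cantor _).le) ?_
            refine ciSup_le' fun i' => (IH i'.1 i'.2).trans ?_
            exact power_le_power_left two_ne_zero (bud_mono i'.2)
        _ = 2 ^ (bud i + bud i) := (power_add 2 (bud i) (bud i)).symm
        _ = 2 ^ bud i := by rw [add_eq_self hb0]
    -- choose embeddings
    have he : ∀ s : Sx i, Nonempty ({y : W0 // y < s.1} ↪ (bud i).out) := fun s =>
      (Cardinal.le_def _ _).1 (by rw [mk_out]; exact s.2)
    let E : ∀ s : Sx i, {y : W0 // y < s.1} ↪ (bud i).out := fun s => (he s).some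
    have h1 : #(lev i : Set (Vtx W0)) ≤ #(Sx i × ((bud i).out → Option ↥(levLT i))) :=
      Cardinal.mk_le_of_injective (enc_inj i E)
    refine h1.trans ?_
    rw [Cardinal.mk_prod, Cardinal.lift_id, Cardinal.lift_id]
    have hS : #(Sx i) ≤ 2 ^ bud i := by
      refine (small_initial ?_).trans (Order.succ_le_of_lt (cantor _))
      intro a
      refine le_trans (Cardinal.mk_le_of_injective (f := fun b : {b : Sx i // b < a} =>
        (⟨b.1.1, b.2⟩ : {y : W0 // y < a.1})) ?_) a.2
      intro b1 b2 hb
      simp only [Subtype.mk.injEq] at hb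
      exact Subtype.ext (Subtype.ext hb)
    have hF : #((bud i).out → Option ↥(levLT i)) ≤ 2 ^ bud i := by
      rw [← Cardinal.power_def, mk_out, Cardinal.mk_option]
      calc (#(levLT i : Set (Vtx W0)) + 1) ^ bud i
          ≤ (2 ^ bud i + 1) ^ bud i := by
            exact Cardinal.power_le_power_right (add_le_add_left hLT 1)
        _ = (2 ^ bud i) ^ bud i := by rw [Cardinal.add_one_eq hb2]
        _ = 2 ^ (bud i * bud i) := (Cardinal.power_mul).symm
        _ = 2 ^ bud i := by rw [mul_eq_self hb0]
    calc #(Sx i) * #((bud i).out → Option ↥(levLT i))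
        ≤ (2 ^ bud i) * (2 ^ bud i) := mul_le_mul' hS hF
      _ = 2 ^ (bud i + bud i) := (power_add 2 (bud i) (bud i)).symm
      _ = 2 ^ bud i := by rw [add_eq_self hb0]

lemma mk_adm_le (lam' : Cardinal) (hb : ∀ i : W0, 2 ^ bud i ≤ lam') :
    #{v : Vtx W0 // v.Adm} ≤ #W0 * lam' := by
  have hcup : {v : Vtx W0 | v.Adm} = ⋃ i : W0, lev i := by
    ext v
    simp only [lev, Set.mem_iUnion, Set.mem_setOf_eq]
    exact ⟨fun ha => ⟨v.stage, ha, rfl⟩, fun ⟨i, ha, _⟩ => ha⟩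
  have : #{v : Vtx W0 // v.Adm} = #({v : Vtx W0 | v.Adm} : Set (Vtx W0)) := rfl
  rw [this, hcup]
  refine (Cardinal.mk_iUnion_le _).trans ?_
  exact mul_le_mul' le_rfl (ciSup_le' fun i => (mk_lev_le i).trans (hb i))

section Embed


def rr {W : Type} (iot : W ↪ W0) (a b : W) : Prop := iot a < iot b

lemma rr_wf [WellFoundedLT W0] {W : Type} (iot : W ↪ W0) : WellFounded (rr iot) :=
  InvImage.wf iot wellFounded_lt

def Bset {W : Type} (G : SimpleGraph W) (iot : W ↪ W0) (w : W)
    (rec : ∀ w', rr iot w' w → Vtx W0) : Set (Vtx W0) :=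
  {u | ∃ w', ∃ h : rr iot w' w, G.Adj w' w ∧ rec w' h = u}

lemma key {W : Type} (G : SimpleGraph W) (iot : W ↪ W0)
    (Hx : ∀ (B : Set (Vtx W0)) (i : W0), #B ≤ #{y : W0 // y < i} →
      ∃ x : W0, Nonempty ({y : W0 // y < x} ≃ B))
    (w : W) (rec : ∀ w', rr iot w' w → Vtx W0) :
    ∃ (x : W0) (f : ∀ y : W0, y < x → Vtx W0),
      (∀ u, (∃ y h, f y h = u) ↔ u ∈ Bset G iot w rec) ∧
      #{y : W0 // y < x} ≤ #{y : W0 // y < iot w} ⊔ ℵ₀ := by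
  have hsub : Bset G iot w rec ⊆ Set.range (fun w' : {w' : W // rr iot w' w} => rec w'.1 w'.2) := by
    rintro u ⟨w', h', _, he⟩
    exact ⟨⟨w', h'⟩, he⟩
  have hB : #(Bset G iot w rec) ≤ #{y : W0 // y < iot w} := by
    refine ((Cardinal.mk_le_mk_of_subset hsub).trans (Cardinal.mk_range_le)).trans ?_
    refine Cardinal.mk_le_of_injective (f := fun w' : {w' : W // rr iot w' w} =>
      (⟨iot w'.1, w'.2⟩ : {y : W0 // y < iot w})) ?_
    intro a b hab
    simp only [Subtype.mk.injEq] at hab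
    exact Subtype.ext (iot.injective (congrArg Subtype.val hab))
  obtain ⟨x, ⟨e⟩⟩ := Hx (Bset G iot w rec) (iot w) hB
  refine ⟨x, fun y h => (e ⟨y, h⟩ : Vtx W0), ?_, ?_⟩
  · intro u
    constructor
    · rintro ⟨y, h, rfl⟩
      exact (e ⟨y, h⟩).2
    · intro hu
      exact ⟨(e.symm ⟨u, hu⟩).1, (e.symm ⟨u, hu⟩).2, by
        show ((e (e.symm ⟨u, hu⟩)) : Vtx W0) = u
        rw [e.apply_symm_apply]⟩
  · rw [Cardinal.mk_congr e]
    exact hB.trans le_sup_left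

variable [WellFoundedLT W0] {W : Type} (G : SimpleGraph W) (iot : W ↪ W0)
    (Hx : ∀ (B : Set (Vtx W0)) (i : W0), #B ≤ #{y : W0 // y < i} →
      ∃ x : W0, Nonempty ({y : W0 // y < x} ≃ B))

noncomputable def emb : W → Vtx W0 :=
  (rr_wf iot).fix (fun w rec => Vtx.wit (iot w)
    (key G iot Hx w rec).choose (key G iot Hx w rec).choose_spec.choose)

lemma emb_eq (w : W) : emb G iot Hx w =
    Vtx.wit (iot w) (key G iot Hx w (fun w' _ => emb G iot Hx w')).choose
      (key G iot Hx w (fun w' _ => emb G iot Hx w')).choose_spec.choose :=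
  WellFounded.fix_eq _ _ _

lemma emb_stage (w : W) : (emb G iot Hx w).stage = iot w := by
  rw [emb_eq]
  rfl

lemma emb_inj : Function.Injective (emb G iot Hx) := fun a b h =>
  iot.injective (by rw [← emb_stage G iot Hx a, ← emb_stage G iot Hx b, h])

lemma emb_mem (w : W) (u : Vtx W0) :
    u.mem (emb G iot Hx w) ↔ ∃ w', ∃ _ : rr iot w' w, G.Adj w' w ∧ emb G iot Hx w' = u := by
  have spec := (key G iot Hx w (fun w' _ => emb G iot Hx w')).choose_spec.choose_spec
  rw [emb_eq]
  constructor
  · rintro ⟨y, hy⟩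
    exact (spec.1 u).1 ⟨y.1, y.2, hy⟩
  · intro hu
    obtain ⟨y, h, he⟩ := (spec.1 u).2 hu
    exact ⟨⟨y, h⟩, he⟩

lemma emb_adm (w : W) : (emb G iot Hx w).Adm := by
  refine (rr_wf iot).induction (C := fun w => (emb G iot Hx w).Adm) w ?_
  intro w IH
  have spec := (key G iot Hx w (fun w' _ => emb G iot Hx w')).choose_spec.choose_spec
  rw [emb_eq]
  refine ⟨?_, ?_, spec.2⟩
  · intro y h
    have := (spec.1 _).1 ⟨y, h, rfl⟩
    obtain ⟨w', h', _, he⟩ := this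
    rw [← he]
    exact IH w' h'
  · intro y h
    have := (spec.1 _).1 ⟨y, h, rfl⟩
    obtain ⟨w', h', _, he⟩ := this
    rw [← he, emb_stage]
    exact h'

lemma emb_adj_of_lt {w1 w2 : W} (hlt : iot w1 < iot w2) :
    (HG W0).Adj ⟨emb G iot Hx w1, emb_adm G iot Hx w1⟩ ⟨emb G iot Hx w2, emb_adm G iot Hx w2⟩ ↔
      G.Adj w1 w2 := by
  constructor
  · rintro ⟨hne, hmem | hmem⟩
    · obtain ⟨w', h', hadj, he⟩ := (emb_mem G iot Hx w2 (emb G iot Hx w1)).1 hmem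
      obtain rfl : w' = w1 := emb_inj G iot Hx he
      exact hadj
    · exfalso
      have := Vtx.stage_lt_of_mem (emb_adm G iot Hx w1) hmem
      rw [emb_stage, emb_stage] at this
      exact absurd hlt (asymm this)
  · intro hadj
    refine ⟨?_, Or.inl ((emb_mem G iot Hx w2 (emb G iot Hx w1)).2 ⟨w1, hlt, hadj, rfl⟩)⟩
    intro hcontra
    have h1 : emb G iot Hx w1 = emb G iot Hx w2 := congrArg Subtype.val hcontra
    have h2 : w1 = w2 := emb_inj G iot Hx h1
    rw [h2] at hlt
    exact lt_irrefl _ hlt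

lemma emb_adj_iff (w1 w2 : W) :
    (HG W0).Adj ⟨emb G iot Hx w1, emb_adm G iot Hx w1⟩ ⟨emb G iot Hx w2, emb_adm G iot Hx w2⟩ ↔
      G.Adj w1 w2 := by
  rcases lt_trichotomy (iot w1) (iot w2) with hlt | heq | hgt
  · exact emb_adj_of_lt G iot Hx hlt
  · obtain rfl : w1 = w2 := iot.injective heq
    simp only [SimpleGraph.irrefl, iff_false]
  · rw [SimpleGraph.adj_comm, G.adj_comm]
    exact emb_adj_of_lt G iot Hx hgt

end Embed
end UG

open UG in
/-- If `λ` is an uncountable cardinal with `2^{<λ} = λ` (i.e. `2^μ ≤ λ` for all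
`μ < λ`), then there is a universal graph of size `λ`: a simple graph on a
vertex set of cardinality `λ` into which every simple graph on a vertex set of
cardinality at most `λ` embeds. -/
theorem exists_universal_graph_of_continuum_hypothesis_below
    (lam : Cardinal) (h_unc : Cardinal.aleph0 < lam)
    (h_pow : ∀ mu : Cardinal, mu < lam → 2 ^ mu ≤ lam) :
    ∃ (V : Type) (R : SimpleGraph V), Cardinal.mk V = lam ∧
      ∀ (W : Type) (G : SimpleGraph W),
        Cardinal.mk W ≤ lam → Nonempty (G ↪g R) := by
  classical
  haveI : IsWellOrder lam.ord.ToType (· < ·) := isWellOrder_lt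
  have hW0 : #lam.ord.ToType = lam := mk_ord_toType lam
  have hsmall : ∀ i : lam.ord.ToType, #{y : lam.ord.ToType // y < i} < lam := by
    intro i
    rw [← Ordinal.card_typein (r := ((· < ·) : lam.ord.ToType → lam.ord.ToType → Prop)) i]
    refine Cardinal.lt_ord.1 ?_
    exact lt_of_lt_of_eq (Ordinal.typein_lt_type _ i) (Ordinal.type_toType lam.ord)
  have hbud : ∀ i : lam.ord.ToType, bud i < lam := fun i => sup_lt_iff.2 ⟨hsmall i, h_unc⟩
  have hb : ∀ i : lam.ord.ToType, 2 ^ bud i ≤ lam := fun i => h_pow _ (hbud i)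
  have hAdm : #{v : Vtx lam.ord.ToType // v.Adm} ≤ lam := by
    refine (mk_adm_le lam hb).trans ?_
    rw [hW0, mul_eq_self h_unc.le]
  have Hx : ∀ (B : Set (Vtx lam.ord.ToType)) (i : lam.ord.ToType), #B ≤ #{y : lam.ord.ToType // y < i} →
      ∃ x : lam.ord.ToType, Nonempty ({y : lam.ord.ToType // y < x} ≃ B) := by
    intro B i hB
    have hc : #B < lam := hB.trans_lt (hsmall i)
    have hord : (#B).ord < type ((· < ·) : lam.ord.ToType → lam.ord.ToType → Prop) := by
      rw [Ordinal.type_toType lam.ord]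
      exact Cardinal.lt_ord.2 (by rw [Cardinal.card_ord]; exact hc)
    refine ⟨(enum ((· < ·) : lam.ord.ToType → lam.ord.ToType → Prop)) ⟨(#B).ord, hord⟩, ?_⟩
    refine Cardinal.eq.1 ?_
    rw [← Ordinal.card_typein (r := ((· < ·) : lam.ord.ToType → lam.ord.ToType → Prop)),
      Ordinal.typein_enum, Cardinal.card_ord]
  refine ⟨{v : Vtx lam.ord.ToType // v.Adm} ⊕ lam.ord.ToType,
    { Adj := fun u v => ∃ a b, u = Sum.inl a ∧ v = Sum.inl b ∧ (HG lam.ord.ToType).Adj a b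
      symm := ⟨by
        rintro u v ⟨a, b, rfl, rfl, h⟩
        exact ⟨b, a, rfl, rfl, h.symm⟩⟩
      loopless := ⟨by
        rintro u ⟨a, b, rfl, hab, h⟩
        obtain rfl : a = b := Sum.inl.inj hab
        exact (HG lam.ord.ToType).loopless.irrefl a h⟩ }, ?_, ?_⟩
  · rw [Cardinal.mk_sum, Cardinal.lift_id, Cardinal.lift_id, hW0,
      Cardinal.add_eq_right h_unc.le hAdm]
  · intro W G hW
    have hWle : #W ≤ #lam.ord.ToType := hW.trans_eq hW0.symm
    obtain ⟨iot⟩ := (Cardinal.le_def W lam.ord.ToType).1 hWle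
    refine ⟨⟨⟨fun w => Sum.inl ⟨emb G iot Hx w, emb_adm G iot Hx w⟩, ?_⟩, ?_⟩⟩
    · intro a b h
      exact emb_inj G iot Hx (congrArg Subtype.val (Sum.inl.inj h))
    · intro a b
      simp only [Function.Embedding.coeFn_mk]
      constructor
      · rintro ⟨a', b', ha, hb, hadj⟩
        obtain rfl := Sum.inl.inj ha
        obtain rfl := Sum.inl.inj hb
        exact (emb_adj_iff G iot Hx a b).1 hadj
      · intro hadj
        exact ⟨_, _, rfl, rfl, (emb_adj_iff G iot Hx a b).2 hadj⟩
end
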